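/- Let d ≥ 1 and let e_1,…,e_k be distinct d-element subsets of [n]; for 0 ≤ j ≤ k let C_j denote the d-clutter consisting of all d-subsets of [n] except e_1,…,e_j. Then e_{j+1} is an exposed circuit of C_j for every 0 ≤ j ≤ k−1 if and only if (x_{e_1},…,x_{e_k}) is a linear quotients ordering in 𝕂[x_1,…,x_n], i.e., for every 0 ≤ j ≤ k−1 the colon ideal (⟨x_{e_1},…,x_{e_j}⟩ : x_{e_{j+1}}) is generated by a subset of the variables {x_1,…,x_n}. -/

import Mathlib

open Finset MvPolynomial

/-- `S` is a clique of the `d`-clutter `C` on `[n]`: either `|S| < d` or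
every `d`-subset of `S` is a circuit of `C`. -/
def IsClutterClique (n d : ℕ) (C : Finset (Finset (Fin n))) (S : Finset (Fin n)) : Prop :=
  S.card < d ∨ ∀ t : Finset (Fin n), t ⊆ S → t.card = d → t ∈ C

/-- `S` is a maximal clique of the `d`-clutter `C`. -/
def IsMaxClutterClique (n d : ℕ) (C : Finset (Finset (Fin n))) (S : Finset (Fin n)) : Prop :=
  IsClutterClique n d C S ∧ ∀ T, IsClutterClique n d C T → S ⊆ T → S = T

/-- A circuit `e ∈ C` is exposed if it is contained in a unique maximal clique. -/
def IsExposedCircuit (n d : ℕ) (C : Finset (Finset (Fin n))) (e : Finset (Fin n)) : Prop :=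
  e ∈ C ∧ ∃! S, IsMaxClutterClique n d C S ∧ e ⊆ S

/-- A circuit is properly exposed if it is exposed and the unique maximal clique
containing it has more than `d` elements. -/
def IsProperlyExposedCircuit (n d : ℕ) (C : Finset (Finset (Fin n))) (e : Finset (Fin n)) :
    Prop :=
  IsExposedCircuit n d C e ∧ ∀ S, IsMaxClutterClique n d C S → e ⊆ S → d < S.card

/-- The complement clutter: all `d`-subsets of `[n]` not in `C`. -/
def complClutter (n d : ℕ) (C : Finset (Finset (Fin n))) : Finset (Finset (Fin n)) :=
  (Finset.powersetCard d (Finset.univ : Finset (Fin n))).filter (· ∉ C)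

/-- The squarefree monomial `x_e = ∏_{i ∈ e} x_i`. -/
noncomputable def xMon (𝕂 : Type) [Field 𝕂] (n : ℕ) (e : Finset (Fin n)) :
    MvPolynomial (Fin n) 𝕂 :=
  ∏ i ∈ e, X i

/-- The circuit ideal `I_C` of a clutter `C`, generated by the monomials `x_e`, `e ∈ C`. -/
noncomputable def circuitIdeal (𝕂 : Type) [Field 𝕂] (n : ℕ) (C : Finset (Finset (Fin n))) :
    Ideal (MvPolynomial (Fin n) 𝕂) :=
  Ideal.span (xMon 𝕂 n '' ↑C)

/-- An ideal is generated by a subset of the variables `{x_1,…,x_n}`. -/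
def GeneratedByVariables (𝕂 : Type) [Field 𝕂] (n : ℕ) (I : Ideal (MvPolynomial (Fin n) 𝕂)) :
    Prop :=
  ∃ S : Set (Fin n), I = Ideal.span ((fun i => (X i : MvPolynomial (Fin n) 𝕂)) '' S)

/-- The clutter `C_j` consisting of all `d`-subsets of `[n]` except `e i` for `i < j`. -/
def clutterUpTo (n d k : ℕ) (e : Fin k → Finset (Fin n)) (j : Fin k) :
    Finset (Finset (Fin n)) :=
  (Finset.powersetCard d (Finset.univ : Finset (Fin n))).filter
    (fun s => ∀ i : Fin k, i < j → e i ≠ s)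

noncomputable def degOf {n : ℕ} (s : Finset (Fin n)) : Fin n →₀ ℕ :=
  ∑ i ∈ s, Finsupp.single i 1

lemma degOf_apply {n : ℕ} (s : Finset (Fin n)) (v : Fin n) :
    degOf s v = if v ∈ s then 1 else 0 := by
  classical
  simp [degOf, Finsupp.finset_sum_apply, Finsupp.single_apply]

lemma degOf_singleton {n : ℕ} (v : Fin n) : degOf ({v} : Finset (Fin n)) = Finsupp.single v 1 := by
  simp [degOf]

lemma xMon_eq (𝕂 : Type) [Field 𝕂] (n : ℕ) (s : Finset (Fin n)) :
    xMon 𝕂 n s = monomial (degOf s) 1 := by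
  rw [xMon]
  classical
  induction s using Finset.induction with
  | empty => simp [degOf]
  | @insert a s h ih =>
      rw [Finset.prod_insert h, ih, X, monomial_mul, one_mul]
      congr 1
      rw [degOf, degOf, Finset.sum_insert h]

lemma degOf_le_degOf {n : ℕ} {s t : Finset (Fin n)} : degOf s ≤ degOf t ↔ s ⊆ t := by
  constructor
  · intro h v hv
    have := h v
    simp [degOf_apply, hv] at this
    by_contra hvt
    simp [hvt] at this
  · intro h v
    simp only [degOf_apply]
    by_cases hv : v ∈ s
    · simp [hv, h hv]
    · simp [hv]

lemma degOf_sdiff_le {n : ℕ} (a b : Finset (Fin n)) (m : Fin n →₀ ℕ) :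
    degOf a ≤ m + degOf b ↔ degOf (a \ b) ≤ m := by
  constructor <;> intro h v <;> have hv := h v <;>
    simp only [Finsupp.add_apply, degOf_apply, Finset.mem_sdiff] at * <;>
    by_cases h1 : v ∈ a <;> by_cases h2 : v ∈ b <;> simp_all

lemma mem_colon_iff {n k : ℕ} (𝕂 : Type) [Field 𝕂] (e : Fin k → Finset (Fin n)) (j : Fin k)
    (p : MvPolynomial (Fin n) 𝕂) :
    p ∈ Submodule.colon
        (Ideal.span ((fun i => xMon 𝕂 n (e i)) '' {i : Fin k | i < j}))
        (Ideal.span {xMon 𝕂 n (e j)}) ↔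
      ∀ m ∈ p.support, ∃ i : Fin k, i < j ∧ degOf (e i \ e j) ≤ m := by
  rw [show (Ideal.span {xMon 𝕂 n (e j)} : Ideal (MvPolynomial (Fin n) 𝕂))
      = Submodule.span _ {xMon 𝕂 n (e j)} from rfl]
  rw [Submodule.mem_colon_span_singleton, smul_eq_mul]
  have himg : ((fun i => xMon 𝕂 n (e i)) '' {i : Fin k | i < j})
      = (fun s => monomial s (1 : 𝕂)) '' ((fun i => degOf (e i)) '' {i : Fin k | i < j}) := by
    rw [Set.image_image]
    exact Set.image_congr fun i _ => xMon_eq 𝕂 n (e i)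
  rw [himg, xMon_eq, mem_ideal_span_monomial_image]
  have hsupp : (p * monomial (degOf (e j)) (1 : 𝕂)).support
      = p.support.map (addRightEmbedding (degOf (e j))) := by
    rw [← single_eq_monomial]
    exact AddMonoidAlgebra.support_coeff_mul_single p 1 (fun y => by simp) _
  rw [hsupp]
  constructor
  · intro h m hm
    obtain ⟨si, ⟨i, hi, rfl⟩, hle⟩ := h (m + degOf (e j))
      (by rw [Finset.mem_map]; exact ⟨m, hm, rfl⟩)
    exact ⟨i, hi, (degOf_sdiff_le _ _ _).1 hle⟩
  · intro h m' hm'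
    rw [Finset.mem_map] at hm'
    obtain ⟨m, hm, rfl⟩ := hm'
    obtain ⟨i, hi, hle⟩ := h m hm
    exact ⟨degOf (e i), ⟨i, hi, rfl⟩, (degOf_sdiff_le _ _ _).2 hle⟩

def CondP {n : ℕ} (k : ℕ) (e : Fin k → Finset (Fin n)) (j : Fin k) : Prop :=
  ∀ i : Fin k, i < j → ∃ i' : Fin k, i' < j ∧ ∃ v ∈ e i \ e j, e i' \ e j = {v}

lemma sdiff_nonempty_of_ne {n d : ℕ} {a b : Finset (Fin n)} (ha : a.card = d) (hb : b.card = d)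
    (hne : a ≠ b) : (a \ b).Nonempty := by
  rw [Finset.sdiff_nonempty]
  intro hsub
  exact hne (Finset.eq_of_subset_of_card_le hsub (by omega))

lemma lemB {n d k : ℕ} (𝕂 : Type) [Field 𝕂] (e : Fin k → Finset (Fin n))
    (hinj : Function.Injective e) (hcard : ∀ i, (e i).card = d) (j : Fin k) :
    GeneratedByVariables 𝕂 n
      (Submodule.colon
        (Ideal.span ((fun i => xMon 𝕂 n (e i)) '' {i : Fin k | i < j}))
        (Ideal.span {xMon 𝕂 n (e j)})) ↔ CondP k e j := by
  classical
  constructor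
  · rintro ⟨S, hS⟩ i hij
    -- x_{e i \ e j} is in the colon ideal
    have h1 : (monomial (degOf (e i \ e j)) (1 : 𝕂)) ∈ Ideal.span
        ((fun i => (X i : MvPolynomial (Fin n) 𝕂)) '' S) := by
      rw [← hS, mem_colon_iff]
      intro m hm
      rw [support_monomial, if_neg one_ne_zero, Finset.mem_singleton] at hm
      exact ⟨i, hij, hm ▸ le_rfl⟩
    rw [mem_ideal_span_X_image] at h1
    obtain ⟨v, hvS, hv⟩ := h1 (degOf (e i \ e j))
      (by rw [support_monomial, if_neg one_ne_zero]; exact Finset.mem_singleton_self _)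
    have hvmem : v ∈ e i \ e j := by
      by_contra hc
      rw [degOf_apply, if_neg hc] at hv
      exact hv rfl
    have h2 : (X v : MvPolynomial (Fin n) 𝕂) ∈ Ideal.span
        ((fun i => (X i : MvPolynomial (Fin n) 𝕂)) '' S) :=
      Ideal.subset_span ⟨v, hvS, rfl⟩
    rw [← hS, mem_colon_iff] at h2
    obtain ⟨i', hi', hle⟩ := h2 (Finsupp.single v 1) (by rw [support_X]; exact Finset.mem_singleton_self _)
    rw [← degOf_singleton, degOf_le_degOf] at hle
    have hne : (e i' \ e j).Nonempty :=
      sdiff_nonempty_of_ne (hcard i') (hcard j) (fun h => (Fin.ne_of_lt hi') (hinj h))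
    rcases Finset.subset_singleton_iff.1 hle with h0 | h0
    · exact absurd h0 (Finset.nonempty_iff_ne_empty.1 hne)
    · exact ⟨i', hi', v, hvmem, h0⟩
  · intro hP
    refine ⟨{v : Fin n | ∃ i : Fin k, i < j ∧ e i \ e j = {v}}, ?_⟩
    apply le_antisymm
    · intro p hp
      rw [mem_colon_iff] at hp
      rw [mem_ideal_span_X_image]
      intro m hm
      obtain ⟨i, hij, hle⟩ := hp m hm
      obtain ⟨i', hi', v, hv, hvi'⟩ := hP i hij
      refine ⟨v, ⟨i', hi', hvi'⟩, ?_⟩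
      have h1 : degOf (e i \ e j) v = 1 := by rw [degOf_apply, if_pos hv]
      have := hle v
      omega
    · rw [Ideal.span_le]
      rintro _ ⟨v, ⟨i, hij, hvi⟩, rfl⟩
      rw [SetLike.mem_coe, mem_colon_iff]
      intro m hm
      rw [support_X, Finset.mem_singleton] at hm
      refine ⟨i, hij, ?_⟩
      rw [hvi, degOf_singleton, hm]

lemma mem_clutterUpTo {n d k : ℕ} {e : Fin k → Finset (Fin n)} {j : Fin k}
    {s : Finset (Fin n)} :
    s ∈ clutterUpTo n d k e j ↔ s.card = d ∧ ∀ i : Fin k, i < j → e i ≠ s := by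
  simp [clutterUpTo, Finset.mem_powersetCard, Finset.subset_univ]

lemma clique_subset {n d : ℕ} {C : Finset (Finset (Fin n))} {S T : Finset (Fin n)}
    (hS : IsClutterClique n d C S) (hTS : T ⊆ S) : IsClutterClique n d C T := by
  rcases hS with h | h
  · exact Or.inl (lt_of_le_of_lt (Finset.card_le_card hTS) h)
  · exact Or.inr fun t ht hc => h t (ht.trans hTS) hc

lemma clique_iff {n d k : ℕ} (e : Fin k → Finset (Fin n)) (hcard : ∀ i, (e i).card = d)
    (j : Fin k) (S : Finset (Fin n)) :
    IsClutterClique n d (clutterUpTo n d k e j) S ↔ ∀ i : Fin k, i < j → ¬ e i ⊆ S := by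
  constructor
  · rintro (h | h) i hij hsub
    · have := Finset.card_le_card hsub
      rw [hcard i] at this
      omega
    · exact (mem_clutterUpTo.1 (h (e i) hsub (hcard i))).2 i hij rfl
  · intro h
    exact Or.inr fun t ht hc =>
      mem_clutterUpTo.2 ⟨hc, fun i hij hne => h i hij (hne ▸ ht)⟩

/-- every clique extends to a maximal clique -/
lemma exists_max_clique {n d : ℕ} {C : Finset (Finset (Fin n))} {S : Finset (Fin n)}
    (hS : IsClutterClique n d C S) :
    ∃ T, IsMaxClutterClique n d C T ∧ S ⊆ T := by
  classical
  obtain ⟨T, hT, hmax'⟩ := Finset.exists_maximal (s :=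
    (Finset.univ : Finset (Finset (Fin n))).filter
      (fun T => IsClutterClique n d C T ∧ S ⊆ T))
    ⟨S, by simp [hS]⟩
  have hmax : ∀ U ∈ (Finset.univ : Finset (Finset (Fin n))).filter
      (fun T => IsClutterClique n d C T ∧ S ⊆ T), ¬ T < U :=
    fun U hU hlt => hlt.not_ge (hmax' hU hlt.le)
  simp only [Finset.mem_filter, Finset.mem_univ, true_and] at hT
  refine ⟨T, ⟨hT.1, fun U hU hTU => ?_⟩, hT.2⟩
  by_contra hne
  exact hmax U (by simp [hU, hT.2.trans hTU]) (lt_of_le_of_ne hTU hne)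

lemma lemA {n d k : ℕ} (hd : 1 ≤ d) (e : Fin k → Finset (Fin n))
    (hinj : Function.Injective e) (hcard : ∀ i, (e i).card = d) (j : Fin k) :
    IsExposedCircuit n d (clutterUpTo n d k e j) (e j) ↔ CondP k e j := by
  classical
  set V : Finset (Fin n) := Finset.univ.filter
    (fun v => v ∉ e j ∧ ∀ i : Fin k, i < j → e i \ e j ≠ {v}) with hV
  set M : Finset (Fin n) := e j ∪ V with hM
  -- any clique containing e j is contained in M
  have hsubM : ∀ T, IsClutterClique n d (clutterUpTo n d k e j) T → e j ⊆ T → T ⊆ M := by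
    intro T hT hejT v hvT
    by_cases hvej : v ∈ e j
    · exact Finset.mem_union_left _ hvej
    · refine Finset.mem_union_right _ (Finset.mem_filter.2 ⟨Finset.mem_univ _, hvej, ?_⟩)
      intro i hij hiv
      refine (clique_iff e hcard j T).1 hT i hij ?_
      intro x hx
      by_cases hxej : x ∈ e j
      · exact hejT hxej
      · have : x ∈ e i \ e j := Finset.mem_sdiff.2 ⟨hx, hxej⟩
        rw [hiv, Finset.mem_singleton] at this
        exact this ▸ hvT
  -- M is a clique iff CondP
  have hMP : IsClutterClique n d (clutterUpTo n d k e j) M ↔ CondP k e j := by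
    rw [clique_iff e hcard j]
    constructor
    · intro h i hij
      have := h i hij
      rw [Finset.not_subset] at this
      obtain ⟨v, hvi, hvM⟩ := this
      have hvej : v ∉ e j := fun hc => hvM (Finset.mem_union_left _ hc)
      have hvV : v ∉ V := fun hc => hvM (Finset.mem_union_right _ hc)
      rw [hV, Finset.mem_filter] at hvV
      push_neg at hvV
      obtain ⟨i', hi', hvi'⟩ := hvV (Finset.mem_univ _) hvej
      exact ⟨i', hi', v, Finset.mem_sdiff.2 ⟨hvi, hvej⟩, hvi'⟩
    · intro hP i hij hsub
      obtain ⟨i', hi', v, hv, hvi'⟩ := hP i hij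
      have hvej := (Finset.mem_sdiff.1 hv).2
      have hvM : v ∈ M := hsub (Finset.mem_sdiff.1 hv).1
      rcases Finset.mem_union.1 hvM with h | h
      · exact hvej h
      · exact ((Finset.mem_filter.1 h).2.2 i' hi' hvi')
  have hejM : e j ⊆ M := Finset.subset_union_left
  constructor
  · rintro ⟨-, S, ⟨⟨hSclique, hSmax⟩, hejS⟩, huniq⟩
    rw [← hMP]
    -- show M ⊆ S, then M is a clique by downward closure
    have hMS : M ⊆ S := by
      intro v hvM
      rcases Finset.mem_union.1 hvM with h | h
      · exact hejS h
      · rw [hV, Finset.mem_filter] at h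
        obtain ⟨-, hvej, hv⟩ := h
        -- e j ∪ {v} is a clique
        have hcl : IsClutterClique n d (clutterUpTo n d k e j) (insert v (e j)) := by
          rw [clique_iff e hcard j]
          intro i hij hsub
          have hne : (e i \ e j).Nonempty :=
            sdiff_nonempty_of_ne (hcard i) (hcard j) (fun h => (Fin.ne_of_lt hij) (hinj h))
          refine hv i hij ?_
          have hss : e i \ e j ⊆ {v} := by
            intro x hx
            rcases Finset.mem_sdiff.1 hx with ⟨hx1, hx2⟩
            rcases Finset.mem_insert.1 (hsub hx1) with h | h
            · exact Finset.mem_singleton.2 h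
            · exact absurd h hx2
          rcases Finset.subset_singleton_iff.1 hss with h0 | h0
          · exact absurd h0 (Finset.nonempty_iff_ne_empty.1 hne)
          · exact h0
        obtain ⟨T, hTmax, hsubT⟩ := exists_max_clique hcl
        have hejT : e j ⊆ T := (Finset.subset_insert v (e j)).trans hsubT
        have := huniq T ⟨hTmax, hejT⟩
        rw [← this]
        exact hsubT (Finset.mem_insert_self v _)
    exact clique_subset hSclique hMS
  · intro hP
    have hMclique := hMP.2 hP
    have hMmax : IsMaxClutterClique n d (clutterUpTo n d k e j) M :=
      ⟨hMclique, fun T hT hMT =>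
        Finset.Subset.antisymm hMT (hsubM T hT (hejM.trans hMT))⟩
    refine ⟨mem_clutterUpTo.2 ⟨hcard j, fun i hij hne => (Fin.ne_of_lt hij) (hinj hne)⟩,
      M, ⟨hMmax, hejM⟩, ?_⟩
    rintro T ⟨⟨hTclique, hTmax⟩, hejT⟩
    exact hTmax M hMclique (hsubM T hTclique hejT) ▸ rfl

/-- each `e_{j+1}` is an exposed circuit of `C_j` iff
`(x_{e_1},…,x_{e_k})` is a linear quotients ordering. -/
theorem exposed_sequence_iff_linear_quotients (n d k : ℕ) (hd : 1 ≤ d) (𝕂 : Type) [Field 𝕂]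
    (e : Fin k → Finset (Fin n)) (hinj : Function.Injective e)
    (hcard : ∀ i, (e i).card = d) :
    (∀ j : Fin k, IsExposedCircuit n d (clutterUpTo n d k e j) (e j)) ↔
      ∀ j : Fin k, GeneratedByVariables 𝕂 n
        (Submodule.colon
          (Ideal.span ((fun i => xMon 𝕂 n (e i)) '' {i : Fin k | i < j}))
          (Ideal.span {xMon 𝕂 n (e j)})) := by
  exact forall_congr' fun j => (lemA hd e hinj hcard j).trans ((lemB 𝕂 e hinj hcard j).symm)
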